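/- Let g be a probability density on an interval (a, b) that is non-decreasing, let s ∈ (a,b), let κ = (s+a)/2, and fix ε > 0 and N ≥ 2. Then ∫_a^κ (-(y-a)ε/(2N)) g(y) dy + ∫_κ^s ((s-y)ε/N) g(y) dy ≥ (ε/(2N)) ∫_a^κ (t-a) g(t) dt > 0. -/

import Mathlib

open MeasureTheory

/-- Key interim-surplus inequality: for a non-decreasing strictly positive probability
density `g` on `(a,b)`, a signal `s ∈ (a,b)`, kink `κ = (s+a)/2`, `ε > 0` and `N ≥ 2`,
the net interim surplus
`∫_a^κ (-(y-a)ε/(2N)) g(y) dy + ∫_κ^s ((s-y)ε/N) g(y) dy`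
is at least `(ε/(2N)) ∫_a^κ (t-a) g(t) dt`, which is strictly positive. -/
theorem interim_surplus_positive (a b s ε : ℝ) (N : ℕ) (g : ℝ → ℝ)
    (hab : a < b) (hs : s ∈ Set.Ioo a b) (hε : 0 < ε) (hN : 2 ≤ N)
    (hg0 : ∀ y ∈ Set.Ioo a b, 0 < g y)
    (hgmono : MonotoneOn g (Set.Ioo a b))
    (hgint : IntervalIntegrable g volume a b)
    (hg1 : (∫ y in a..b, g y) = 1)
    (hint1 : IntervalIntegrable (fun y => (y - a) * g y) volume a b)
    (hint2 : IntervalIntegrable (fun y => (s - y) * g y) volume a b) :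
    0 < (ε/(2*N)) * ∫ t in a..((s + a)/2), (t - a) * g t ∧
    (∫ y in a..((s + a)/2), (-((y - a) * ε/(2*N))) * g y)
        + (∫ y in ((s + a)/2)..s, ((s - y) * ε/N) * g y)
      ≥ (ε/(2*N)) * ∫ t in a..((s + a)/2), (t - a) * g t := by
  obtain ⟨has, hsb⟩ := hs
  set κ := (s + a) / 2 with hκ
  have haκ : a < κ := by simp only [hκ]; linarith
  have hκs : κ < s := by simp only [hκ]; linarith
  have hκb : κ < b := lt_trans hκs hsb
  have hNpos : (0:ℝ) < (N:ℝ) := by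
    have : (2:ℝ) ≤ (N:ℝ) := by exact_mod_cast hN
    linarith
  have hc : (0:ℝ) < ε / (2 * N) := by positivity
  -- integrability on subintervals
  have hA_int : IntervalIntegrable (fun t => (t - a) * g t) volume a κ :=
    hint1.mono_set (by
      rw [Set.uIcc_of_le haκ.le, Set.uIcc_of_le hab.le]
      exact Set.Icc_subset_Icc le_rfl hκb.le)
  have hB_int : IntervalIntegrable (fun y => (s - y) * g y) volume κ s :=
    hint2.mono_set (by
      rw [Set.uIcc_of_le hκs.le, Set.uIcc_of_le hab.le]
      exact Set.Icc_subset_Icc haκ.le hsb.le)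
  -- the composed function is integrable on a..κ
  have hfun : (fun x => (s - (a + s - x)) * g (a + s - x))
      = fun t => (t - a) * g (a + s - t) := by
    funext x; congr 1; ring
  have hcomp_int : IntervalIntegrable (fun t => (t - a) * g (a + s - t)) volume a κ := by
    have h := (hB_int.comp_sub_left (a + s)).symm
    have e1 : a + s - s = a := by ring
    have e2 : a + s - κ = κ := by simp only [hκ]; ring
    rw [e1, e2, hfun] at h
    exact h
  -- change of variables
  have hcov : (∫ t in a..κ, (t - a) * g (a + s - t)) = ∫ x in κ..s, (s - x) * g x := by
    have h := intervalIntegral.integral_comp_sub_left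
      (a := a) (b := κ) (fun x => (s - x) * g x) (a + s)
    have e1 : a + s - a = s := by ring
    have e2 : a + s - κ = κ := by simp only [hκ]; ring
    rw [e1, e2, hfun] at h
    exact h
  -- pointwise comparison on Icc a κ
  have hmono : ∀ t ∈ Set.Icc a κ, (t - a) * g t ≤ (t - a) * g (a + s - t) := by
    intro t ht
    rcases eq_or_lt_of_le ht.1 with h | h
    · simp [← h]
    · have ht1 : t ∈ Set.Ioo a b := ⟨h, lt_of_le_of_lt ht.2 hκb⟩
      have ht2 : a + s - t ∈ Set.Ioo a b := by
        constructor
        · have : t < s := lt_of_le_of_lt ht.2 hκs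
          linarith
        · linarith [h]
      have hle : t ≤ a + s - t := by
        have := ht.2; simp only [hκ] at this; linarith
      exact mul_le_mul_of_nonneg_left (hgmono ht1 ht2 hle) (by linarith [ht.1])
  have hAB : (∫ t in a..κ, (t - a) * g t) ≤ ∫ x in κ..s, (s - x) * g x := by
    rw [← hcov]
    exact intervalIntegral.integral_mono_on haκ.le hA_int hcomp_int hmono
  -- positivity
  have hApos : 0 < ∫ t in a..κ, (t - a) * g t := by
    apply intervalIntegral.intervalIntegral_pos_of_pos_on hA_int _ haκ
    intro x hx
    have hx' : x ∈ Set.Ioo a b := ⟨hx.1, lt_trans hx.2 hκb⟩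
    exact mul_pos (by linarith [hx.1]) (hg0 x hx')
  constructor
  · exact mul_pos hc hApos
  -- rewrite the surplus integrals
  have e1 : (∫ y in a..κ, (-((y - a) * ε / (2 * N))) * g y)
      = (-(ε / (2 * N))) * ∫ y in a..κ, (y - a) * g y := by
    rw [← intervalIntegral.integral_const_mul]
    apply intervalIntegral.integral_congr
    intro y _; ring
  have e2 : (∫ y in κ..s, ((s - y) * ε / N) * g y)
      = (ε / N) * ∫ y in κ..s, (s - y) * g y := by
    rw [← intervalIntegral.integral_const_mul]
    apply intervalIntegral.integral_congr
    intro y _; ring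
  rw [e1, e2]
  have key : (ε / N) * (∫ t in a..κ, (t - a) * g t)
      ≤ (ε / N) * ∫ x in κ..s, (s - x) * g x :=
    mul_le_mul_of_nonneg_left hAB (by positivity)
  have hNne : (N:ℝ) ≠ 0 := ne_of_gt hNpos
  have heq : ε / (N:ℝ) = 2 * (ε / (2 * N)) := by field_simp
  rw [heq] at key ⊢
  linarith [key]
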